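/- Let p(t) = ∑_{k≥0} p^{(k)}(0) t^k / k! for i = 1,...,u be convergent Taylor series, let n ≥ 1, 0 ≤ l ≤ n, and let m ≥ n. Define v^{z,s} by the identity ∂_t^m ∫_t^{2t}dt_1 ∫_t^{t_1}dt_2 ... ∫_t^{t_{l-1}}dt_l ∫_0^t dt_{l+1} ... ∫_0^{t_{n-1}}dt_n ∏_{i=1}^u p_i(s_{2i} − s_{2i−1}) |_{t=0} = ∑_{z_1+...+z_u = m−n} v^{z,s} ∏_{i=1}^u p_i^{(z_i)}(0), where s_1,...,s_{2u} ∈ {t_1,...,t_n} are distinct time variables. Then |v^{z,s}| ≤ 2^{m−n} m! / ((n−l)! · l! · z_1! ··· z_u!). -/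

import Mathlib

open MeasureTheory Polynomial

/-- Nested integral `∫_{lo}^{hi} dx₁ ∫_{lo}^{x₁} dx₂ ⋯ ∫_{lo}^{x_{k-1}} dx_k f(x₁,…,x_k)`. -/
noncomputable def nestedIntegral : (k : ℕ) → ℝ → ℝ → ((Fin k → ℝ) → ℝ) → ℝ
  | 0, _, _, f => f (fun i => i.elim0)
  | k + 1, lo, hi, f =>
      ∫ x in lo..hi, nestedIntegral k lo x (fun v => f (Fin.cons x v))


lemma continuous_finCons {k : ℕ} :
    Continuous (fun q : ℝ × (Fin k → ℝ) => (Fin.cons q.1 q.2 : Fin (k+1) → ℝ)) := by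
  apply continuous_pi
  intro i
  refine Fin.cases ?_ ?_ i
  · simpa using continuous_fst
  · intro j; simpa [Function.comp_def] using (continuous_apply j).comp continuous_snd

lemma nested_cont {α : Type*} [TopologicalSpace α] :
    ∀ (k : ℕ) (lo hi : α → ℝ), Continuous lo → Continuous hi →
    ∀ (f : α → (Fin k → ℝ) → ℝ), Continuous (fun p : α × (Fin k → ℝ) => f p.1 p.2) →
    Continuous fun a => nestedIntegral k (lo a) (hi a) (f a)
  | 0, lo, hi, _, _, f, hf => by
      simp only [nestedIntegral]
      exact hf.comp (continuous_id.prodMk continuous_const)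
  | k+1, lo, hi, hlo, hhi, f, hf => by
      have key : Continuous fun p : α × ℝ =>
          nestedIntegral k (lo p.1) p.2 (fun v => f p.1 (Fin.cons p.2 v)) := by
        apply nested_cont k (fun p : α × ℝ => lo p.1) (fun p => p.2)
          (hlo.comp continuous_fst) continuous_snd
        exact hf.comp ((continuous_fst.comp continuous_fst).prodMk
          (continuous_finCons.comp ((continuous_snd.comp continuous_fst).prodMk continuous_snd)))
      have hii : ∀ (a : α) (b c : ℝ), IntervalIntegrable
          (fun x => nestedIntegral k (lo a) x (fun v => f a (Fin.cons x v))) volume b c := by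
        intro a b c
        exact (key.comp ((continuous_const (y := a)).prodMk continuous_id)).intervalIntegrable b c
      simp only [nestedIntegral]
      have hsplit : ∀ a : α, (∫ x in lo a..hi a,
            nestedIntegral k (lo a) x (fun v => f a (Fin.cons x v)))
          = (∫ x in (0:ℝ)..hi a, nestedIntegral k (lo a) x (fun v => f a (Fin.cons x v)))
            - ∫ x in (0:ℝ)..lo a, nestedIntegral k (lo a) x (fun v => f a (Fin.cons x v)) := by
        intro a
        rw [intervalIntegral.integral_interval_sub_left (hii a 0 (hi a)) (hii a 0 (lo a))]
      simp only [hsplit]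
      apply Continuous.sub
      · exact intervalIntegral.continuous_parametric_intervalIntegral_of_continuous
          (f := fun a x => nestedIntegral k (lo a) x (fun v => f a (Fin.cons x v))) key hhi
      · exact intervalIntegral.continuous_parametric_intervalIntegral_of_continuous
          (f := fun a x => nestedIntegral k (lo a) x (fun v => f a (Fin.cons x v))) key hlo

lemma finCons_smul {k : ℕ} (c x : ℝ) (v : Fin k → ℝ) :
    Fin.cons (α := fun _ => ℝ) (c * x) (c • v) = c • (Fin.cons x v : Fin (k+1) → ℝ) := by
  funext i
  refine Fin.cases ?_ ?_ i
  · simp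
  · intro j; simp

lemma nested_const_mul : ∀ (k : ℕ) (lo hi c : ℝ) (f : (Fin k → ℝ) → ℝ),
    nestedIntegral k lo hi (fun v => c * f v) = c * nestedIntegral k lo hi f
  | 0, lo, hi, c, f => rfl
  | k+1, lo, hi, c, f => by
      simp only [nestedIntegral]
      rw [← intervalIntegral.integral_const_mul]
      congr 1
      funext x
      exact nested_const_mul k lo x c (fun v => f (Fin.cons x v))

lemma nested_smul : ∀ (k : ℕ) (lo hi c : ℝ) (f : (Fin k → ℝ) → ℝ),
    nestedIntegral k (c * lo) (c * hi) f
      = c ^ k * nestedIntegral k lo hi (fun v => f (c • v))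
  | 0, lo, hi, c, f => by
      simp only [nestedIntegral, pow_zero, one_mul]
      congr 1
      funext i
      exact i.elim0
  | k+1, lo, hi, c, f => by
      simp only [nestedIntegral]
      rw [← intervalIntegral.smul_integral_comp_mul_left
        (fun x => nestedIntegral k (c * lo) x (fun v => f (Fin.cons x v))) c]
      have : ∀ y : ℝ, nestedIntegral k (c * lo) (c * y) (fun v => f (Fin.cons (c * y) v))
          = c ^ k * nestedIntegral k lo y (fun v => f (c • (Fin.cons y v : Fin (k+1) → ℝ))) := by
        intro y
        rw [nested_smul k lo y c]
        simp only [finCons_smul]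
      simp only [this, smul_eq_mul, pow_succ]
      rw [intervalIntegral.integral_const_mul]
      ring

lemma nested_bound : ∀ (k : ℕ) (lo hi M : ℝ) (f : (Fin k → ℝ) → ℝ), lo ≤ hi → 0 ≤ M →
    Continuous f → (∀ v : Fin k → ℝ, (∀ i, v i ∈ Set.Icc lo hi) → |f v| ≤ M) →
    |nestedIntegral k lo hi f| ≤ M * (hi - lo) ^ k / (k.factorial : ℝ)
  | 0, lo, hi, M, f, hle, hM, hf, hb => by
      simpa [nestedIntegral] using hb (fun i => i.elim0) (fun i => i.elim0)
  | k+1, lo, hi, M, f, hle, hM, hf, hb => by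
      have hcont : ∀ x : ℝ, Continuous (fun v : Fin k → ℝ => f (Fin.cons x v)) := by
        intro x
        exact hf.comp (continuous_finCons.comp (continuous_const.prodMk continuous_id))
      have hIH : ∀ x ∈ Set.Icc lo hi,
          |nestedIntegral k lo x (fun v => f (Fin.cons x v))| ≤ M * (x - lo) ^ k / k.factorial := by
        intro x hx
        refine nested_bound k lo x M _ hx.1 hM (hcont x) ?_
        intro v hv
        refine hb (Fin.cons x v) ?_
        intro i
        refine Fin.cases ?_ ?_ i
        · exact hx
        · intro j
          have := hv j
          exact ⟨(this.1), le_trans this.2 hx.2⟩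
      have hgc : Continuous (fun x : ℝ => nestedIntegral k lo x (fun v => f (Fin.cons x v))) := by
        refine nested_cont k (fun _ => lo) (fun x => x) continuous_const continuous_id
          (fun x v => f (Fin.cons x v)) ?_
        exact hf.comp continuous_finCons
      simp only [nestedIntegral]
      calc |∫ x in lo..hi, nestedIntegral k lo x (fun v => f (Fin.cons x v))|
          ≤ ∫ x in lo..hi, |nestedIntegral k lo x (fun v => f (Fin.cons x v))| := by
            simpa using intervalIntegral.norm_integral_le_integral_norm
              (f := fun x => nestedIntegral k lo x (fun v => f (Fin.cons x v))) hle
        _ ≤ ∫ x in lo..hi, M * (x - lo) ^ k / k.factorial := by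
            apply intervalIntegral.integral_mono_on hle
            · exact hgc.abs.intervalIntegrable _ _
            · exact (Continuous.intervalIntegrable (by continuity) _ _)
            · intro x hx
              exact hIH x hx
        _ = M * (hi - lo) ^ (k+1) / (k+1).factorial := by
            simp only [div_eq_mul_inv, mul_assoc]
            rw [intervalIntegral.integral_const_mul]
            have : (∫ x in lo..hi, (x - lo) ^ k * ((k.factorial : ℝ))⁻¹)
                = (hi - lo) ^ (k+1) * ((k+1).factorial : ℝ)⁻¹ := by
              rw [intervalIntegral.integral_mul_const]
              rw [intervalIntegral.integral_comp_sub_right (fun x : ℝ => x ^ k) lo]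
              rw [integral_pow]
              rw [Nat.factorial_succ]
              push_cast
              field_simp
              simp
            rw [this]

lemma iteratedDeriv_const_mul_pow (m : ℕ) (C : ℝ) :
    iteratedDeriv m (fun t : ℝ => C * t ^ m) 0 = m.factorial * C := by
  have hcm : iteratedDeriv m (fun t : ℝ => C * t ^ m) 0
      = C * iteratedDeriv m (fun t : ℝ => t ^ m) 0 := by
    rw [← iteratedDerivWithin_univ, ← iteratedDerivWithin_univ]
    exact iteratedDerivWithin_const_mul (Set.mem_univ 0) uniqueDiffOn_univ C
      ((contDiff_id.pow m).contDiffWithinAt)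
  rw [hcm, iteratedDeriv_eq_iterate]
  have h1 : deriv^[m] (fun x : ℝ => x ^ m) 0
      = (∏ i ∈ Finset.range m, ((m : ℝ) - i)) * 0 ^ (m - m) := iter_deriv_pow m 0 m
  have h2 : (∏ i ∈ Finset.range m, ((m : ℝ) - i)) = m.factorial := by
    have hc : ∀ i ∈ Finset.range m, ((m : ℝ) - i) = ((m - i : ℕ) : ℝ) := by
      intro i hi
      rw [Nat.cast_sub (Finset.mem_range.1 hi).le]
    rw [Finset.prod_congr rfl hc, ← Nat.cast_prod]
    have h3 : (∏ i ∈ Finset.range m, (m - i)) = m.factorial := by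
      have h4 := Finset.prod_range_reflect (fun j => j + 1) m
      rw [Finset.prod_range_add_one_eq_factorial] at h4
      rw [← h4]
      refine Finset.prod_congr rfl fun i hi => ?_
      have := Finset.mem_range.1 hi
      omega
    rw [h3]
  rw [h1, h2, Nat.sub_self, pow_zero, mul_one, mul_comm]

/-- The coefficients `v^{z,s}` defined by
`∂_t^m ∫_t^{2t}dt₁ ⋯ ∫_t^{t_{l-1}}dt_l ∫_0^t dt_{l+1} ⋯ ∫_0^{t_{n-1}}dt_n
   ∏_{i=1}^u p_i(s_{2i} − s_{2i−1}) |_{t=0}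
 = ∑_{z₁+⋯+z_u = m−n} v^{z,s} ∏_i p_i^{(z_i)}(0)`
(with `n = l + k` and `s₁,…,s_{2u}` distinct time variables, the identity holding for all
Taylor series, here represented by polynomials `p_i`) satisfy
`|v^{z,s}| ≤ 2^{m−n} m! / ((n−l)! l! z₁!⋯z_u!)`. -/
theorem nested_integral_coefficient_bound (l k u m : ℕ) (hn : 1 ≤ l + k) (hm : l + k ≤ m)
    (s : Fin (2 * u) → Fin (l + k)) (hs : Function.Injective s)
    (v : (Fin u → ℕ) → ℝ)
    (hv : ∀ p : Fin u → Polynomial ℝ,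
      iteratedDeriv m
        (fun t =>
          nestedIntegral l t (2 * t) (fun w1 =>
            nestedIntegral k 0 t (fun w2 =>
              ∏ i : Fin u,
                (p i).eval
                  (Fin.append w1 w2 (s ⟨2 * (i : ℕ) + 1, by have := i.isLt; omega⟩) -
                   Fin.append w1 w2 (s ⟨2 * (i : ℕ), by have := i.isLt; omega⟩))))) 0
      = ∑ z ∈ Finset.Nat.antidiagonalTuple u (m - (l + k)),
          v z * ∏ i : Fin u, (Polynomial.derivative^[z i] (p i)).eval 0) :
    ∀ z ∈ Finset.Nat.antidiagonalTuple u (m - (l + k)),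
      |v z| ≤ 2 ^ (m - (l + k)) * (m.factorial : ℝ) /
        ((k.factorial : ℝ) * (l.factorial : ℝ) * ∏ i : Fin u, ((z i).factorial : ℝ)) := by
  intro z hz
  have hzsum : ∑ i, z i = m - (l + k) := Finset.Nat.mem_antidiagonalTuple.mp hz
  set D := m - (l + k) with hD
  -- the integrand with `p i = X ^ z i`
  set H : (Fin l → ℝ) → (Fin k → ℝ) → ℝ := fun w1 w2 =>
    ∏ i : Fin u,
      (Fin.append w1 w2 (s ⟨2 * (i : ℕ) + 1, by have := i.isLt; omega⟩) -
       Fin.append w1 w2 (s ⟨2 * (i : ℕ), by have := i.isLt; omega⟩)) ^ z i with hHdef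
  set C : ℝ := nestedIntegral l 1 2 (fun w1 => nestedIntegral k 0 1 (H w1)) with hCdef
  -- continuity of the integrand
  have happ : ∀ j : Fin (l + k),
      Continuous fun p : (Fin l → ℝ) × (Fin k → ℝ) => Fin.append p.1 p.2 j := by
    intro j
    refine Fin.addCases (fun i => ?_) (fun i => ?_) j
    · simpa [Fin.append_left, Function.comp_def] using (continuous_apply i).comp
        (continuous_fst : Continuous fun p : (Fin l → ℝ) × (Fin k → ℝ) => p.1)
    · simpa [Fin.append_right, Function.comp_def] using (continuous_apply i).comp
        (continuous_snd : Continuous fun p : (Fin l → ℝ) × (Fin k → ℝ) => p.2)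
  have hHcont : Continuous fun p : (Fin l → ℝ) × (Fin k → ℝ) => H p.1 p.2 := by
    apply continuous_finset_prod
    intro i _
    exact ((happ _).sub (happ _)).pow _
  -- smul commutes with append
  have happsmul : ∀ (t : ℝ) (w1 : Fin l → ℝ) (w2 : Fin k → ℝ),
      Fin.append (t • w1) (t • w2) = t • Fin.append w1 w2 := by
    intro t w1 w2
    funext j
    refine Fin.addCases (fun i => ?_) (fun i => ?_) j <;>
      simp [Fin.append_left, Fin.append_right]
  -- homogeneity of H
  have hHsmul : ∀ (t : ℝ) (w1 : Fin l → ℝ) (w2 : Fin k → ℝ),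
      H (t • w1) (t • w2) = t ^ D * H w1 w2 := by
    intro t w1 w2
    simp only [hHdef, happsmul, Pi.smul_apply, smul_eq_mul, ← mul_sub, mul_pow,
      Finset.prod_mul_distrib, Finset.prod_pow_eq_pow_sum, hzsum]
  -- the scaling identity
  have key : ∀ t : ℝ,
      nestedIntegral l t (2 * t) (fun w1 => nestedIntegral k 0 t (H w1)) = t ^ m * C := by
    intro t
    have e1 : (t : ℝ) = t * 1 := by ring
    have e2 : 2 * t = t * 2 := by ring
    have e0 : (0 : ℝ) = t * 0 := by ring
    rw [show nestedIntegral l t (2 * t) (fun w1 => nestedIntegral k 0 t (H w1))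
        = nestedIntegral l (t * 1) (t * 2)
            (fun w1 => nestedIntegral k (t * 0) (t * 1) (H w1)) by rw [← e1, ← e2, ← e0]]
    rw [nested_smul]
    simp only [nested_smul k 0 1 t, hHsmul, nested_const_mul]
    have hlkD : D + (l + k) = m := by omega
    calc t ^ l * (t ^ k * (t ^ D * nestedIntegral l 1 2 fun w1 => nestedIntegral k 0 1 (H w1)))
        = t ^ (D + (l + k)) * C := by rw [hCdef]; ring
      _ = t ^ m * C := by rw [hlkD]
  -- specialize the hypothesis to `p i = X ^ z i`
  have h := hv (fun i => X ^ z i)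
  have hfeq : (fun t =>
      nestedIntegral l t (2 * t) (fun w1 =>
        nestedIntegral k 0 t (fun w2 =>
          ∏ i : Fin u,
            ((X : ℝ[X]) ^ z i).eval
              (Fin.append w1 w2 (s ⟨2 * (i : ℕ) + 1, by have := i.isLt; omega⟩) -
               Fin.append w1 w2 (s ⟨2 * (i : ℕ), by have := i.isLt; omega⟩)))))
      = fun t : ℝ => C * t ^ m := by
    funext t
    simp only [eval_pow, eval_X]
    rw [show (fun w1 => nestedIntegral k 0 t fun w2 =>
        ∏ i : Fin u,
          (Fin.append w1 w2 (s ⟨2 * (i : ℕ) + 1, by have := i.isLt; omega⟩) -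
           Fin.append w1 w2 (s ⟨2 * (i : ℕ), by have := i.isLt; omega⟩)) ^ z i)
        = fun w1 => nestedIntegral k 0 t (H w1) from rfl]
    rw [key t, mul_comm]
  rw [hfeq, iteratedDeriv_const_mul_pow] at h
  -- simplify the right-hand side
  have hRHS : ∑ z' ∈ Finset.Nat.antidiagonalTuple u (m - (l + k)),
      v z' * ∏ i : Fin u, (Polynomial.derivative^[z' i] ((X : ℝ[X]) ^ z i)).eval 0
      = v z * ∏ i : Fin u, ((z i).factorial : ℝ) := by
    rw [Finset.sum_eq_single_of_mem z hz]
    · congr 1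
      refine Finset.prod_congr rfl fun i _ => ?_
      rw [Polynomial.iterate_derivative_X_pow_eq_natCast_mul, Nat.sub_self]
      simp [Nat.descFactorial_self]
    · intro z' hz' hne
      obtain ⟨i0, hi0⟩ : ∃ i0, z' i0 ≠ z i0 := by
        by_contra hc
        push_neg at hc
        exact hne (funext hc)
      refine mul_eq_zero_of_right _ (Finset.prod_eq_zero (Finset.mem_univ i0) ?_)
      rw [Polynomial.iterate_derivative_X_pow_eq_natCast_mul]
      rcases lt_or_gt_of_ne hi0 with hlt | hgt
      · simp [zero_pow (show z i0 - z' i0 ≠ 0 by omega)]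
      · simp [Nat.descFactorial_eq_zero_iff_lt.mpr hgt]
  rw [hRHS] at h
  -- bound on C
  have h2D : (0 : ℝ) ≤ 2 ^ D := by positivity
  have hinner : ∀ w1 : Fin l → ℝ, (∀ i, w1 i ∈ Set.Icc (1 : ℝ) 2) →
      |nestedIntegral k 0 1 (H w1)| ≤ (2 : ℝ) ^ D / k.factorial := by
    intro w1 hw1
    have hb := nested_bound k 0 1 ((2 : ℝ) ^ D) (H w1) (by norm_num) h2D
      (hHcont.comp (continuous_const.prodMk continuous_id)) ?_
    · simpa using hb
    · intro w2 hw2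
      have habs : ∀ b1 b2 : Fin (l + k),
          |Fin.append w1 w2 b1 - Fin.append w1 w2 b2| ≤ 2 := by
        have hmem : ∀ b : Fin (l + k), Fin.append w1 w2 b ∈ Set.Icc (0 : ℝ) 2 := by
          intro b
          refine Fin.addCases (fun i => ?_) (fun i => ?_) b
          · rw [Fin.append_left]
            exact ⟨le_trans zero_le_one (hw1 i).1, (hw1 i).2⟩
          · rw [Fin.append_right]
            exact ⟨(hw2 i).1, le_trans (hw2 i).2 one_le_two⟩
        intro b1 b2
        have h1 := hmem b1
        have h2 := hmem b2
        rw [abs_sub_le_iff]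
        constructor <;> [skip; skip] <;>
          · simp only [Set.mem_Icc] at h1 h2; linarith
      rw [hHdef]
      calc |∏ i : Fin u,
            (Fin.append w1 w2 (s ⟨2 * (i : ℕ) + 1, by have := i.isLt; omega⟩) -
             Fin.append w1 w2 (s ⟨2 * (i : ℕ), by have := i.isLt; omega⟩)) ^ z i|
          = ∏ i : Fin u,
            |Fin.append w1 w2 (s ⟨2 * (i : ℕ) + 1, by have := i.isLt; omega⟩) -
             Fin.append w1 w2 (s ⟨2 * (i : ℕ), by have := i.isLt; omega⟩)| ^ z i := by
            rw [Finset.abs_prod]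
            exact Finset.prod_congr rfl fun i _ => abs_pow _ _
        _ ≤ ∏ i : Fin u, (2 : ℝ) ^ z i := by
            refine Finset.prod_le_prod (fun i _ => by positivity) fun i _ => ?_
            exact pow_le_pow_left₀ (abs_nonneg _) (habs _ _) _
        _ = (2 : ℝ) ^ D := by rw [Finset.prod_pow_eq_pow_sum, hzsum]
  have hCbound : |C| ≤ (2 : ℝ) ^ D / (k.factorial * l.factorial) := by
    have hb := nested_bound l 1 2 ((2 : ℝ) ^ D / k.factorial)
      (fun w1 => nestedIntegral k 0 1 (H w1)) one_le_two (by positivity) ?_ hinner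
    · rw [hCdef]
      calc |nestedIntegral l 1 2 fun w1 => nestedIntegral k 0 1 (H w1)|
          ≤ (2 : ℝ) ^ D / k.factorial * (2 - 1) ^ l / l.factorial := hb
        _ = (2 : ℝ) ^ D / (k.factorial * l.factorial) := by
            norm_num
            ring
    · exact nested_cont k (fun _ => (0 : ℝ)) (fun _ => (1 : ℝ)) continuous_const
        continuous_const H hHcont
  -- conclude
  have hprodpos : (0 : ℝ) < ∏ i : Fin u, ((z i).factorial : ℝ) :=
    Finset.prod_pos fun i _ => by positivity
  have hkpos : (0 : ℝ) < k.factorial := by positivity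
  have hlpos : (0 : ℝ) < l.factorial := by positivity
  have hveq : v z = (m.factorial : ℝ) * C / ∏ i : Fin u, ((z i).factorial : ℝ) := by
    field_simp
    linarith [h]
  rw [hveq, abs_div, abs_of_pos hprodpos, abs_mul, Nat.abs_cast]
  rw [div_le_div_iff₀ hprodpos (by positivity)]
  calc (m.factorial : ℝ) * |C| * (k.factorial * l.factorial * ∏ i : Fin u, ((z i).factorial : ℝ))
      ≤ (m.factorial : ℝ) * ((2 : ℝ) ^ D / (k.factorial * l.factorial))
        * (k.factorial * l.factorial * ∏ i : Fin u, ((z i).factorial : ℝ)) := by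
        have := mul_le_mul_of_nonneg_left hCbound (by positivity : (0:ℝ) ≤ (m.factorial : ℝ))
        exact mul_le_mul_of_nonneg_right this (by positivity)
    _ = 2 ^ D * (m.factorial : ℝ) * ∏ i : Fin u, ((z i).factorial : ℝ) := by
        field_simp
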